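/- Let m ≥ 2, n ≥ 1, k ≥ 1 be integers and let S_1,…,S_m be finite multisets with elements in {1,…,n} such that ⋂_{i=1}^m S_i = ∅ (multiset intersection). Let S_0 = ⋂_{i=1}^{m−1} S_i, S'_i = S_i \ S_0 (multiset difference) for i ∈ {1,…,m}, and k' = k − |S_0|. Then the family (S_1,…,S_m) satisfies the condition [for every nonempty I ⊆ {1,…,m}: k − |⋂_{i∈I} S_i| ≥ Σ_{i∈I} (k − |S_i|)] if and only if the family (S'_1,…,S'_m) satisfies the corresponding condition with k replaced by k' [for every nonempty I ⊆ {1,…,m}: k' − |⋂_{i∈I} S'_i| ≥ Σ_{i∈I} (k' − |S'_i|)]. -/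

import Mathlib

private lemma count_inf'_aux {ι α : Type*} [DecidableEq α] {I : Finset ι} (hI : I.Nonempty)
    (f : ι → Multiset α) (a : α) :
    (I.inf' hI f).count a = I.inf' hI fun i => (f i).count a := by
  induction hI using Finset.Nonempty.cons_induction with
  | singleton i => simp
  | cons i s hi hs ih =>
      rw [Finset.inf'_cons hs, Finset.inf'_cons hs, ← ih, Multiset.inf_eq_inter,
        Multiset.count_inter]

private lemma inf'_sub_aux {ι : Type*} {I : Finset ι} (hI : I.Nonempty) (f : ι → ℕ) (c : ℕ) :
    (I.inf' hI fun i => f i - c) = I.inf' hI f - c := by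
  induction hI using Finset.Nonempty.cons_induction with
  | singleton i => simp
  | cons i s hi hs ih =>
      rw [Finset.inf'_cons hs, Finset.inf'_cons hs, ih]
      omega

theorem multiset_reduction_condition (m n k : ℕ) (hm : 2 ≤ m) (hn : 1 ≤ n) (hk : 1 ≤ k)
    (S : Fin m → Multiset (Fin n))
    (hu : (Finset.univ : Finset (Fin m)).Nonempty)
    (hint : Finset.univ.inf' hu S = 0)
    (hne : (Finset.univ.erase (⟨m - 1, by omega⟩ : Fin m)).Nonempty)
    (S0 : Multiset (Fin n))
    (hS0 : S0 = (Finset.univ.erase (⟨m - 1, by omega⟩ : Fin m)).inf' hne S)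
    (S' : Fin m → Multiset (Fin n)) (hS' : ∀ i, S' i = S i - S0)
    (k' : ℤ) (hk' : k' = (k : ℤ) - S0.card) :
    (∀ I : Finset (Fin m), ∀ hI : I.Nonempty,
        (k : ℤ) - ((I.inf' hI S).card : ℤ) ≥ ∑ i ∈ I, ((k : ℤ) - ((S i).card : ℤ)))
      ↔ (∀ I : Finset (Fin m), ∀ hI : I.Nonempty,
        k' - ((I.inf' hI S').card : ℤ) ≥ ∑ i ∈ I, (k' - ((S' i).card : ℤ))) := by
  set t : Fin m := ⟨m - 1, by omega⟩ with htdef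
  -- S0 ≤ S i for i ≠ t
  have hS0le : ∀ i : Fin m, i ≠ t → S0 ≤ S i := by
    intro i hi
    rw [hS0]
    exact Finset.inf'_le _ (Finset.mem_erase.mpr ⟨hi, Finset.mem_univ i⟩)
  -- S t is disjoint from S0
  have hdisj : ∀ a : Fin n, min ((S t).count a) (S0.count a) = 0 := by
    intro a
    have huniv : (Finset.univ : Finset (Fin m)) =
        Finset.cons t (Finset.univ.erase t) (Finset.notMem_erase t _) := by
      rw [Finset.cons_eq_insert, Finset.insert_erase (Finset.mem_univ t)]
    have h0 : S t ⊓ S0 = 0 := by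
      rw [hS0, ← Finset.inf'_cons (f := S) (hb := Finset.notMem_erase t Finset.univ), ← hint]
      congr 1
      exact huniv.symm
    have := congrArg (Multiset.count a) h0
    rwa [Multiset.inf_eq_inter, Multiset.count_inter, Multiset.count_zero] at this
  -- S' t = S t
  have hSt : S' t = S t := by
    ext a
    rw [hS', Multiset.count_sub]
    have := hdisj a
    omega
  -- card of S' i for i ≠ t
  have hcard' : ∀ i : Fin m, i ≠ t → ((S' i).card : ℤ) = (S i).card - S0.card := by
    intro i hi
    rw [hS', Multiset.card_sub (hS0le i hi), Nat.cast_sub (Multiset.card_le_card (hS0le i hi))]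
  -- main pointwise equivalence
  suffices h : ∀ I : Finset (Fin m), ∀ hI : I.Nonempty,
      ((k : ℤ) - ((I.inf' hI S).card : ℤ) ≥ ∑ i ∈ I, ((k : ℤ) - ((S i).card : ℤ)))
      ↔ (k' - ((I.inf' hI S').card : ℤ) ≥ ∑ i ∈ I, (k' - ((S' i).card : ℤ))) by
    constructor
    · intro H I hI; exact (h I hI).mp (H I hI)
    · intro H I hI; exact (h I hI).mpr (H I hI)
  intro I hI
  by_cases htI : t ∈ I
  · -- t ∈ I : intersections agree
    have hinf : I.inf' hI S' = I.inf' hI S := by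
      ext a
      rw [count_inf'_aux, count_inf'_aux]
      by_cases h0 : S0.count a = 0
      · apply Finset.inf'_congr hI rfl
        intro i _
        rw [hS', Multiset.count_sub, h0, Nat.sub_zero]
      · have h1 : (S t).count a = 0 := by have := hdisj a; omega
        have h2 : (S' t).count a = 0 := by rw [hSt]; exact h1
        have l1 : I.inf' hI (fun i => (S' i).count a) ≤ 0 := h2 ▸ Finset.inf'_le _ htI
        have l2 : I.inf' hI (fun i => (S i).count a) ≤ 0 := h1 ▸ Finset.inf'_le _ htI
        omega
    have hsum : ∑ i ∈ I, (k' - ((S' i).card : ℤ))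
        = (∑ i ∈ I, ((k : ℤ) - ((S i).card : ℤ))) - S0.card := by
      rw [← Finset.sum_erase_add I _ htI, ← Finset.sum_erase_add I
        (fun i => (k : ℤ) - ((S i).card : ℤ)) htI]
      have : ∑ i ∈ I.erase t, (k' - ((S' i).card : ℤ))
          = ∑ i ∈ I.erase t, ((k : ℤ) - ((S i).card : ℤ)) := by
        apply Finset.sum_congr rfl
        intro i hi
        rw [hcard' i (Finset.ne_of_mem_erase hi), hk']
        ring
      rw [this, hSt, hk']
      ring
    rw [hinf, hsum, hk']
    constructor <;> intro <;> linarith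
  · -- t ∉ I : intersections shift by S0
    have hinf : I.inf' hI S' = I.inf' hI S - S0 := by
      ext a
      rw [count_inf'_aux, Multiset.count_sub, count_inf'_aux]
      rw [← inf'_sub_aux hI (fun i => (S i).count a) (S0.count a)]
      apply Finset.inf'_congr hI rfl
      intro i _
      rw [hS', Multiset.count_sub]
    have hS0inf : S0 ≤ I.inf' hI S :=
      Finset.le_inf' hI _ fun i hi => hS0le i (fun h => htI (h ▸ hi))
    have hcardinf : ((I.inf' hI S').card : ℤ) = (I.inf' hI S).card - S0.card := by
      rw [hinf, Multiset.card_sub hS0inf, Nat.cast_sub (Multiset.card_le_card hS0inf)]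
    have hsum : ∑ i ∈ I, (k' - ((S' i).card : ℤ))
        = ∑ i ∈ I, ((k : ℤ) - ((S i).card : ℤ)) := by
      apply Finset.sum_congr rfl
      intro i hi
      rw [hcard' i (fun h => htI (h ▸ hi)), hk']
      ring
    rw [hcardinf, hsum, hk']
    constructor <;> intro <;> linarith
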